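/- Let d be a Hardy type series derivation on K = ℝ((Γ)) and a ∈ K* with a ≇ 1. Then LT(a'/a) = LE(a) · LT(LF(a)'/LF(a)); in particular LM(a'/a) = θ^{(LF(a))} where θ^{(φ)} := LM(φ'/φ), and LC(a'/a) = LE(a) · LC(LF(a)'/LF(a)). -/

import Mathlib

noncomputable section
open Classical

/-! Core: generalized series fields ℝ((Γ)) realized as Hahn series over Γᵒᵈ,
so supports are anti-well-ordered in Γ and the leading monomial is the max of the support. -/

/-- The generalized series field `ℝ((Γ))`. -/
abbrev GSF (Γ : Type*) [AddCommGroup Γ] [LinearOrder Γ] [IsOrderedAddMonoid Γ] : Type _ := HahnSeries Γᵒᵈ ℝ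

variable {Γ : Type*} [AddCommGroup Γ] [LinearOrder Γ] [IsOrderedAddMonoid Γ]

/-- The leading monomial of a series (max of the support; junk value `0` at `0`). -/
def LM (a : GSF Γ) : Γ := OrderDual.ofDual a.order

/-- The leading coefficient. -/
def LC (a : GSF Γ) : ℝ := a.leadingCoeff

/-- The monomial with exponent `γ` (written multiplicatively in the paper). -/
def mon (γ : Γ) : GSF Γ := HahnSeries.single (OrderDual.toDual γ) 1

/-- The leading term `LT(a)`. -/
def LTm (a : GSF Γ) : GSF Γ := LC a • mon (LM a)

/-- The leading monomial, with value `⊥` at `0`. -/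
def LMb (a : GSF Γ) : WithBot Γ := if a = 0 then ⊥ else ↑(LM a)

/-- Positivity in the anti-lexicographic ordering: positive leading coefficient. -/
def Kpos (a : GSF Γ) : Prop := 0 < LC a

/-- The anti-lexicographic (strict) ordering on `ℝ((Γ))`. -/
def Klt (a b : GSF Γ) : Prop := Kpos (b - a)

/-- Dominance relation `a ≼ b`. -/
def Kdom (a b : GSF Γ) : Prop := LMb a ≤ LMb b

/-- Strict dominance `a ≺ b`. -/
def KdomLt (a b : GSF Γ) : Prop := LMb a < LMb b

/-- Asymptotic equivalence `a ≍ b` (equal leading monomials). -/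
def Kasymp (a b : GSF Γ) : Prop := LMb a = LMb b

/-- `a ∼ b` : equal leading terms. -/
def Ksim (a b : GSF Γ) : Prop := a ≠ 0 ∧ b ≠ 0 ∧ LTm a = LTm b

/-- The maximal ideal `K^{≺1}` of the valuation ring: all monomials `≺ 1`. -/
def Kprec1 : Set (GSF Γ) := {x | ∀ τ ∈ x.support, OrderDual.ofDual τ < (0 : Γ)}

/-- The subring `K^{≻1}` of purely infinite series. -/
def Ksucc1 : Set (GSF Γ) := {x | ∀ τ ∈ x.support, (0 : Γ) < OrderDual.ofDual τ}

/-- The logarithm of `1`-units: `l₁(1+ε) = Σ_{n≥1} (-1)^{n-1} εⁿ/n` (junk `0` off `1 + K^{≺1}`). -/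
def l1 (x : GSF Γ) : GSF Γ :=
  if h : 0 < (x - 1).orderTop then
    (HahnSeries.SummableFamily.mk
      (fun n : ℕ => ((-1 : ℝ) ^ n / (n + 1)) • (x - 1) ^ (n + 1))
      (by
        refine Set.IsPWO.mono (HahnSeries.SummableFamily.isPWO_iUnion_support_powers
          (HahnSeries.zero_le_orderTop_iff.mp (le_of_lt h))) ?_
        intro g hg
        simp only [Set.mem_iUnion] at hg ⊢
        obtain ⟨n, hn⟩ := hg
        exact ⟨n + 1, Function.support_const_smul_subset _ _ hn⟩)
      (by
        intro g
        refine ((HahnSeries.SummableFamily.pow_finite_co_support h g).preimage_embedding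
          ⟨Nat.succ, Nat.succ_injective⟩).subset fun n hn => ?_
        simp only [Set.mem_preimage, Function.mem_support, Function.Embedding.coeFn_mk,
          Set.mem_setOf_eq] at hn ⊢
        exact fun hc => hn (by rw [HahnSeries.coeff_smul, hc, smul_zero]))).hsum
  else 0

/-! Second core layer: Γ as a subgroup of the Hahn group H(Φ), series derivations,
Hardy type derivations, series morphisms and pre-logarithms. -/

/-- A realization of the ordered abelian group `Γ` as a subgroup of the Hahn group
`H(Φ)` over the chain `Φ` of fundamental monomials (written additively): each `γ ∈ Γ`
is a formal product `∏ φ^{γ_φ}` with real exponents `expo γ φ` and anti-well-ordered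
support; `fm φ` is the fundamental monomial `φ` itself viewed in `Γ`; `LF` is the
leading fundamental monomial (max of the support, junk at `0`); the ordering of `Γ`
is the anti-lexicographic one. -/
structure HahnEmb (Φ Γ : Type*) [LinearOrder Φ] [AddCommGroup Γ] [LinearOrder Γ] [IsOrderedAddMonoid Γ] where
  expo : Γ → Φ → ℝ
  expo_add : ∀ α β φ, expo (α + β) φ = expo α φ + expo β φ
  expo_inj : ∀ α β, (∀ φ, expo α φ = expo β φ) → α = β
  supp_awo : ∀ α : Γ, (Function.support (expo α)).WellFoundedOn ((· > ·) : Φ → Φ → Prop)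
  fm : Φ → Γ
  expo_fm : ∀ φ ψ, expo (fm φ) ψ = if ψ = φ then 1 else 0
  LF : Γ → Φ
  LF_mem : ∀ α, α ≠ 0 → expo α (LF α) ≠ 0
  LF_max : ∀ α φ, expo α φ ≠ 0 → φ ≤ LF α
  pos_iff : ∀ α : Γ, 0 < α ↔ (α ≠ 0 ∧ 0 < expo α (LF α))

variable {Φ : Type*} [LinearOrder Φ]

/-- The support `supp γ ⊆ Φ` of a generalized monomial. -/
def HahnEmb.supp (E : HahnEmb Φ Γ) (γ : Γ) : Set Φ := Function.support (E.expo γ)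

/-- The leading exponent `LE(γ)`. -/
def HahnEmb.LE (E : HahnEmb Φ Γ) (γ : Γ) : ℝ := E.expo γ (E.LF γ)

/-- The logarithmic derivative `φ'/φ` of a fundamental monomial. -/
def logD (E : HahnEmb Φ Γ) (d : GSF Γ → GSF Γ) (φ : Φ) : GSF Γ :=
  d (mon (E.fm φ)) / mon (E.fm φ)

/-- `θ^{(φ)} = LM(φ'/φ)`. -/
def theta (E : HahnEmb Φ Γ) (d : GSF Γ → GSF Γ) (φ : Φ) : Γ := LM (logD E d φ)

/-- A series derivation: `1' = 0`, the strong Leibniz rule (D1) and strong linearity (D2),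
expressed coefficientwise (finitely many contributions to each coefficient, whose sum is
the coefficient of the derivative). -/
structure IsSeriesDerivation (E : HahnEmb Φ Γ) (d : GSF Γ → GSF Γ) : Prop where
  deriv_one : d 1 = 0
  leibniz_fin : ∀ (γ : Γ) (τ : Γᵒᵈ),
      {φ : Φ | E.expo γ φ * (logD E d φ).coeff τ ≠ 0}.Finite
  leibniz : ∀ (γ : Γ) (τ : Γᵒᵈ),
      (d (mon γ)).coeff (OrderDual.toDual (γ + OrderDual.ofDual τ))
        = ∑ᶠ φ : Φ, E.expo γ φ * (logD E d φ).coeff τ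
  linear_fin : ∀ (a : GSF Γ) (τ : Γᵒᵈ),
      {γ : Γᵒᵈ | a.coeff γ * (d (HahnSeries.single γ 1)).coeff τ ≠ 0}.Finite
  linear : ∀ (a : GSF Γ) (τ : Γᵒᵈ),
      (d a).coeff τ = ∑ᶠ γ : Γᵒᵈ, a.coeff γ * (d (HahnSeries.single γ 1)).coeff τ

/-- A Hardy type derivation: (HD1) the constants are `ℝ`, (HD2) l'Hospital's rule,
(HD3) compatibility of the logarithmic derivative with the dominance relation,
with `≍` exactly for comparable elements. -/
structure IsHardy (E : HahnEmb Φ Γ) (d : GSF Γ → GSF Γ) : Prop where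
  constants : ∀ a : GSF Γ, d a = 0 ↔ ∃ r : ℝ, a = (r : ℝ) • (1 : GSF Γ)
  hospital : ∀ a b : GSF Γ, a ≠ 0 → b ≠ 0 → ¬ Kasymp a 1 → ¬ Kasymp b 1 →
      (Kdom a b ↔ Kdom (d a) (d b))
  logcomp : ∀ a b : GSF Γ, a ≠ 0 → b ≠ 0 → |LM b| < |LM a| → 0 < |LM b| →
      Kdom (d b / b) (d a / a) ∧
      (Kasymp (d a / a) (d b / b) ↔ E.LF (LM a) = E.LF (LM b))

/-- A series morphism `l : Γ → K`, i.e. axiom (L): `l(∏ φ^{α_φ}) = Σ α_φ l(φ)`,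
expressed coefficientwise via the summability of the families involved. -/
structure IsSeriesMorphism (E : HahnEmb Φ Γ) (l : Γ → GSF Γ) : Prop where
  fin : ∀ (α : Γ) (τ : Γᵒᵈ), {φ : Φ | E.expo α φ * (l (E.fm φ)).coeff τ ≠ 0}.Finite
  eq : ∀ (α : Γ) (τ : Γᵒᵈ), (l α).coeff τ = ∑ᶠ φ : Φ, E.expo α φ * (l (E.fm φ)).coeff τ

/-- The pre-logarithm on `K_{>0}` induced by a pre-logarithmic section `l` on `Γ`:
`l(a) = log(LC a) + l(LM a) + l₁(1 + ε_a)` where `a = LT(a)(1+ε_a)`. -/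
def prelogOf (l : Γ → GSF Γ) (a : GSF Γ) : GSF Γ :=
  Real.log (LC a) • (1 : GSF Γ) + l (LM a) + l1 (a / LTm a)

/-- `l` is a pre-logarithmic section: a series morphism into `K^{≻1}` which is an
embedding of ordered groups. -/
structure IsPrelogSection (E : HahnEmb Φ Γ) (l : Γ → GSF Γ) : Prop where
  morphism : IsSeriesMorphism E l
  purely_infinite : ∀ α : Γ, l α ∈ Ksucc1
  order_preserving : ∀ α β : Γ, α < β → Klt (l α) (l β)

/-- Compatibility of the induced pre-logarithm with the derivation:
`l(a)' = a'/a` for all `a > 0`. -/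
def LogCompatible (d : GSF Γ → GSF Γ) (l : Γ → GSF Γ) : Prop :=
  ∀ a : GSF Γ, Kpos a → d (prelogOf l a) = d a / a

/-- The Growth Axiom (GA): `l(α) ≺ α` for all monomials `α ≻ 1`. -/
def GrowthAxiom (l : Γ → GSF Γ) : Prop :=
  ∀ α : Γ, 0 < α → KdomLt (l α) (mon α)


section Aux

variable {Γ' : Type*} [AddCommGroup Γ'] [LinearOrder Γ'] [IsOrderedAddMonoid Γ']

lemma mon_ne_zero (γ : Γ') : mon γ ≠ 0 := HahnSeries.single_ne_zero one_ne_zero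

lemma order_mon (γ : Γ') : (mon γ).order = OrderDual.toDual γ :=
  HahnSeries.order_single one_ne_zero

lemma LM_mon (γ : Γ') : LM (mon γ) = γ := by
  rw [LM, order_mon]; rfl

lemma LMb_of_ne {a : GSF Γ'} (h : a ≠ 0) : LMb a = ((LM a : Γ') : WithBot Γ') := if_neg h

lemma LM_one : LM (1 : GSF Γ') = 0 := by
  rw [LM, HahnSeries.order_one]; rfl

/-- If `a ≇ 1` and `a ≠ 0` then `LM a ≠ 0`. -/
lemma LM_ne_zero_of_not_asymp_one {a : GSF Γ'} (ha : a ≠ 0) (hna : ¬ Kasymp a 1) :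
    LM a ≠ 0 := by
  intro h
  exact hna (by rw [Kasymp, LMb_of_ne ha, LMb_of_ne (one_ne_zero), LM_one, h])

/-- Characterization of the order of a Hahn series. -/
lemma order_eq_of {a : GSF Γ'} {g : Γ'ᵒᵈ} (h1 : a.coeff g ≠ 0)
    (h2 : ∀ g' : Γ'ᵒᵈ, g' < g → a.coeff g' = 0) : a.order = g := by
  have ha : a ≠ 0 := HahnSeries.ne_zero_of_coeff_ne_zero h1
  refine le_antisymm (HahnSeries.order_le_of_coeff_ne_zero h1) (not_lt.1 fun hlt => ?_)
  exact (mt HahnSeries.coeff_order_eq_zero.1 ha) (h2 _ hlt)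

lemma coeff_of_LM_lt {a : GSF Γ'} {τ : Γ'} (h : LM a < τ) :
    a.coeff (OrderDual.toDual τ) = 0 := by
  by_cases ha : a = 0
  · simp [ha]
  · exact HahnSeries.coeff_eq_zero_of_lt_order (by
      change OrderDual.toDual τ < a.order
      rw [show a.order = OrderDual.toDual (LM a) from rfl]
      exact OrderDual.toDual_lt_toDual.2 h)

lemma LC_ne_zero {a : GSF Γ'} (h : a ≠ 0) : LC a ≠ 0 :=
  HahnSeries.leadingCoeff_ne_zero.2 h

lemma coeff_LM {a : GSF Γ'} : a.coeff (OrderDual.toDual (LM a)) = LC a := by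
  rw [LC, HahnSeries.leadingCoeff_eq]; rfl

end Aux
section Aux2

variable {Φ Γ : Type*} [LinearOrder Φ] [AddCommGroup Γ] [LinearOrder Γ] [IsOrderedAddMonoid Γ]
variable (E : HahnEmb Φ Γ) (d : GSF Γ → GSF Γ)

lemma HahnEmb.expo_zero (φ : Φ) : E.expo 0 φ = 0 := by
  have := E.expo_add 0 0 φ
  simp only [add_zero] at this
  linarith

lemma HahnEmb.expo_neg (α : Γ) (φ : Φ) : E.expo (-α) φ = - E.expo α φ := by
  have := E.expo_add α (-α) φ
  rw [add_neg_cancel, E.expo_zero] at this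
  linarith

lemma HahnEmb.fm_ne_zero (φ : Φ) : E.fm φ ≠ 0 := by
  intro h
  have h1 := E.expo_fm φ φ
  rw [h, E.expo_zero, if_pos rfl] at h1
  exact one_ne_zero h1.symm

lemma HahnEmb.LF_fm (φ : Φ) : E.LF (E.fm φ) = φ := by
  have h1 := E.LF_mem (E.fm φ) (E.fm_ne_zero φ)
  rw [E.expo_fm] at h1
  by_contra h
  rw [if_neg h] at h1
  exact h1 rfl

lemma HahnEmb.fm_pos (φ : Φ) : 0 < E.fm φ := by
  rw [E.pos_iff]
  refine ⟨E.fm_ne_zero φ, ?_⟩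
  rw [E.LF_fm, E.expo_fm, if_pos rfl]
  exact one_pos

lemma HahnEmb.fm_lt_fm {φ ψ : Φ} (h : φ < ψ) : E.fm φ < E.fm ψ := by
  rw [← sub_pos, E.pos_iff]
  have hexpo : ∀ χ, E.expo (E.fm ψ - E.fm φ) χ
      = (if χ = ψ then 1 else 0) - (if χ = φ then 1 else 0) := by
    intro χ
    have := E.expo_add (E.fm ψ) (-E.fm φ) χ
    rw [E.expo_neg] at this
    rw [sub_eq_add_neg, this, E.expo_fm, E.expo_fm]; ring
  have hψ : E.expo (E.fm ψ - E.fm φ) ψ = 1 := by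
    rw [hexpo, if_pos rfl, if_neg (ne_of_gt h)]; ring
  have hne : E.fm ψ - E.fm φ ≠ 0 := by
    intro hc
    rw [hc, E.expo_zero] at hψ
    exact one_ne_zero hψ.symm
  have hLF : E.LF (E.fm ψ - E.fm φ) = ψ := by
    have hle : ψ ≤ E.LF (E.fm ψ - E.fm φ) := E.LF_max _ ψ (by rw [hψ]; exact one_ne_zero)
    have hmem := E.LF_mem _ hne
    rw [hexpo] at hmem
    rcases eq_or_lt_of_le hle with heq | hlt
    · exact heq.symm
    · exfalso
      rw [if_neg (ne_of_gt hlt), if_neg (ne_of_gt (h.trans hlt))] at hmem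
      simp at hmem
  exact ⟨hne, by rw [hLF, hψ]; exact one_pos⟩

lemma d_mon_fm_ne_zero (hhardy : IsHardy E d) (φ : Φ) : d (mon (E.fm φ)) ≠ 0 := by
  intro h
  obtain ⟨r, hr⟩ := (hhardy.constants _).1 h
  have h1 : (mon (E.fm φ)).coeff (OrderDual.toDual (E.fm φ)) = (1 : ℝ) := by
    simp [mon, HahnSeries.coeff_single]
  rw [hr] at h1
  have h2 : ((r : ℝ) • (1 : GSF Γ)).coeff (OrderDual.toDual (E.fm φ)) = 0 := by
    rw [HahnSeries.coeff_smul, HahnSeries.coeff_one, if_neg, smul_zero]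
    intro hc
    exact E.fm_ne_zero φ (by
      have : OrderDual.ofDual (OrderDual.toDual (E.fm φ)) = OrderDual.ofDual (0 : Γᵒᵈ) := by
        rw [hc]
      exact this)
  rw [h2] at h1
  exact one_ne_zero h1.symm

lemma logD_ne_zero (hhardy : IsHardy E d) (φ : Φ) : logD E d φ ≠ 0 :=
  div_ne_zero (d_mon_fm_ne_zero E d hhardy φ) (mon_ne_zero _)

/-- Strict monotonicity of `θ` along `Φ`. -/
lemma theta_strictMono (hhardy : IsHardy E d) {φ ψ : Φ} (h : φ < ψ) :
    LM (logD E d φ) < LM (logD E d ψ) := by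
  have hφpos := E.fm_pos φ
  have hψpos := E.fm_pos ψ
  have habs : |LM (mon (E.fm φ))| < |LM (mon (E.fm ψ))| := by
    rw [LM_mon, LM_mon, abs_of_pos hφpos, abs_of_pos hψpos]
    exact E.fm_lt_fm h
  have habs0 : (0 : Γ) < |LM (mon (E.fm φ))| := by
    rw [LM_mon, abs_of_pos hφpos]; exact hφpos
  obtain ⟨hdom, hiff⟩ := hhardy.logcomp (mon (E.fm ψ)) (mon (E.fm φ))
    (mon_ne_zero _) (mon_ne_zero _) habs habs0
  have hne : ¬ Kasymp (d (mon (E.fm ψ)) / mon (E.fm ψ)) (d (mon (E.fm φ)) / mon (E.fm φ)) := by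
    rw [hiff, LM_mon, LM_mon, E.LF_fm, E.LF_fm]
    exact fun hc => (ne_of_gt h) hc
  have hlt : LMb (logD E d φ) < LMb (logD E d ψ) :=
    lt_of_le_of_ne hdom (fun hc => hne hc.symm)
  rw [LMb_of_ne (logD_ne_zero E d hhardy φ), LMb_of_ne (logD_ne_zero E d hhardy ψ)] at hlt
  exact_mod_cast hlt

end Aux2
section Aux3

variable {Φ Γ : Type*} [LinearOrder Φ] [AddCommGroup Γ] [LinearOrder Γ] [IsOrderedAddMonoid Γ]
variable (E : HahnEmb Φ Γ) (d : GSF Γ → GSF Γ)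

lemma d_mon_coeff_zero (hder : IsSeriesDerivation E d) (hhardy : IsHardy E d)
    {β : Γ} (hβ : β ≠ 0) {τ : Γ} (hτ : LM (logD E d (E.LF β)) < τ) :
    (d (mon β)).coeff (OrderDual.toDual (β + τ)) = 0 := by
  have h := hder.leibniz β (OrderDual.toDual τ)
  rw [OrderDual.ofDual_toDual] at h
  rw [h]
  apply finsum_eq_zero_of_forall_eq_zero
  intro φ
  by_cases hφ : E.expo β φ = 0
  · rw [hφ, zero_mul]
  · have hle : φ ≤ E.LF β := E.LF_max β φ hφ
    have hlt : LM (logD E d φ) < τ := by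
      rcases eq_or_lt_of_le hle with heq | hlt
      · rw [heq]; exact hτ
      · exact (theta_strictMono E d hhardy hlt).trans hτ
    rw [coeff_of_LM_lt hlt, mul_zero]

lemma d_mon_coeff_LM (hder : IsSeriesDerivation E d) (hhardy : IsHardy E d)
    {β : Γ} (hβ : β ≠ 0) :
    (d (mon β)).coeff (OrderDual.toDual (β + LM (logD E d (E.LF β))))
      = E.LE β * LC (logD E d (E.LF β)) := by
  have h := hder.leibniz β (OrderDual.toDual (LM (logD E d (E.LF β))))
  rw [OrderDual.ofDual_toDual] at h
  rw [h, finsum_eq_single _ (E.LF β)]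
  · rw [HahnEmb.LE, coeff_LM]
  · intro φ hφ
    by_cases hφ0 : E.expo β φ = 0
    · rw [hφ0, zero_mul]
    · have hlt : φ < E.LF β := lt_of_le_of_ne (E.LF_max β φ hφ0) hφ
      rw [coeff_of_LM_lt (theta_strictMono E d hhardy hlt), mul_zero]

lemma LC_d_mon_ne_zero (hhardy : IsHardy E d) {β : Γ} (hβ : β ≠ 0) :
    E.LE β * LC (logD E d (E.LF β)) ≠ 0 :=
  mul_ne_zero (E.LF_mem β hβ) (LC_ne_zero (logD_ne_zero E d hhardy (E.LF β)))

lemma order_d_mon (hder : IsSeriesDerivation E d) (hhardy : IsHardy E d)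
    {β : Γ} (hβ : β ≠ 0) :
    (d (mon β)).order = OrderDual.toDual (β + LM (logD E d (E.LF β))) := by
  apply order_eq_of
  · rw [d_mon_coeff_LM E d hder hhardy hβ]
    exact LC_d_mon_ne_zero E d hhardy hβ
  · intro g' hg'
    have hlt : β + LM (logD E d (E.LF β)) < OrderDual.ofDual g' := hg'
    have : g' = OrderDual.toDual (β + (OrderDual.ofDual g' - β)) := by
      simp
    rw [this]
    exact d_mon_coeff_zero E d hder hhardy hβ (by rw [lt_sub_iff_add_lt, add_comm]; exact hlt)

lemma d_mon_ne_zero (hder : IsSeriesDerivation E d) (hhardy : IsHardy E d)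
    {β : Γ} (hβ : β ≠ 0) : d (mon β) ≠ 0 :=
  HahnSeries.ne_zero_of_coeff_ne_zero (by
    rw [d_mon_coeff_LM E d hder hhardy hβ]
    exact LC_d_mon_ne_zero E d hhardy hβ)

lemma LM_d_mon (hder : IsSeriesDerivation E d) (hhardy : IsHardy E d)
    {β : Γ} (hβ : β ≠ 0) :
    LM (d (mon β)) = β + LM (logD E d (E.LF β)) := by
  rw [LM, order_d_mon E d hder hhardy hβ]; rfl

/-- Strict monotonicity of `d` on nontrivial monomials (from l'Hospital). -/
lemma LMb_d_mon_lt (hhardy : IsHardy E d) {β' β : Γ} (hβ' : β' ≠ 0) (hβ : β ≠ 0)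
    (h : β' < β) : LMb (d (mon β')) < LMb (d (mon β)) := by
  have hasymp : ∀ {δ : Γ}, δ ≠ 0 → ¬ Kasymp (mon δ) 1 := by
    intro δ hδ hc
    rw [Kasymp, LMb_of_ne (mon_ne_zero δ), LMb_of_ne (one_ne_zero), LM_mon, LM_one] at hc
    exact hδ (by exact_mod_cast hc)
  have hiff := hhardy.hospital (mon β) (mon β') (mon_ne_zero _) (mon_ne_zero _)
    (hasymp hβ) (hasymp hβ')
  have hnot : ¬ Kdom (mon β) (mon β') := by
    rw [Kdom, LMb_of_ne (mon_ne_zero β), LMb_of_ne (mon_ne_zero β'), LM_mon, LM_mon]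
    exact fun hc => absurd (by exact_mod_cast hc : β ≤ β') (not_le.2 h)
  exact not_le.1 fun hc => (hnot (hiff.2 hc))

end Aux3
section Aux4

variable {Φ Γ : Type*} [LinearOrder Φ] [AddCommGroup Γ] [LinearOrder Γ] [IsOrderedAddMonoid Γ]
variable (E : HahnEmb Φ Γ) (d : GSF Γ → GSF Γ)

lemma d_mon_coeff_zero_of_lt (hder : IsSeriesDerivation E d) (hhardy : IsHardy E d)
    {β' γ : Γ} (hγ : γ ≠ 0) (h : β' < γ) {τ : Γ}
    (hτ : LM (logD E d (E.LF γ)) ≤ τ) :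
    (d (mon β')).coeff (OrderDual.toDual (γ + τ)) = 0 := by
  by_cases hβ' : β' = 0
  · rw [hβ', show mon (0 : Γ) = 1 from HahnSeries.single_zero_one, hder.deriv_one,
      HahnSeries.coeff_zero]
  · have hlt := LMb_d_mon_lt E d hhardy hβ' hγ h
    by_cases hz : d (mon β') = 0
    · rw [hz, HahnSeries.coeff_zero]
    · rw [LMb_of_ne hz, LMb_of_ne (d_mon_ne_zero E d hder hhardy hγ),
        LM_d_mon E d hder hhardy hγ] at hlt
      have hlt' : LM (d (mon β')) < γ + τ := by
        calc LM (d (mon β')) < γ + LM (logD E d (E.LF γ)) := by exact_mod_cast hlt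
        _ ≤ γ + τ := add_le_add_right hτ γ
      exact coeff_of_LM_lt hlt'

lemma supp_le_LM {a : GSF Γ} {g' : Γᵒᵈ} (h : a.coeff g' ≠ 0) :
    OrderDual.ofDual g' ≤ LM a := by
  have := HahnSeries.order_le_of_coeff_ne_zero h
  exact this

lemma d_coeff_hi (hder : IsSeriesDerivation E d) (hhardy : IsHardy E d)
    {a : GSF Γ} (hγ : LM a ≠ 0) {τ : Γ}
    (hτ : LM (logD E d (E.LF (LM a))) < τ) :
    (d a).coeff (OrderDual.toDual (LM a + τ)) = 0 := by
  rw [hder.linear a (OrderDual.toDual (LM a + τ))]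
  apply finsum_eq_zero_of_forall_eq_zero
  intro g'
  by_cases hc : a.coeff g' = 0
  · rw [hc, zero_mul]
  · have hle : OrderDual.ofDual g' ≤ LM a := supp_le_LM hc
    have hsg : (HahnSeries.single g' 1 : GSF Γ) = mon (OrderDual.ofDual g') := rfl
    rcases eq_or_lt_of_le hle with heq | hlt
    · rw [hsg, heq, d_mon_coeff_zero E d hder hhardy hγ hτ, mul_zero]
    · rw [hsg, d_mon_coeff_zero_of_lt E d hder hhardy hγ hlt hτ.le, mul_zero]

lemma d_coeff_top (hder : IsSeriesDerivation E d) (hhardy : IsHardy E d)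
    {a : GSF Γ} (ha : a ≠ 0) (hγ : LM a ≠ 0) :
    (d a).coeff (OrderDual.toDual (LM a + LM (logD E d (E.LF (LM a)))))
      = LC a * (E.LE (LM a) * LC (logD E d (E.LF (LM a)))) := by
  rw [hder.linear a _, finsum_eq_single _ (OrderDual.toDual (LM a))]
  · rw [coeff_LM,
      show (HahnSeries.single (OrderDual.toDual (LM a)) 1 : GSF Γ) = mon (LM a) from rfl,
      d_mon_coeff_LM E d hder hhardy hγ]
  · intro g' hg'
    by_cases hc : a.coeff g' = 0
    · rw [hc, zero_mul]
    · have hle : OrderDual.ofDual g' ≤ LM a := supp_le_LM hc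
      have hlt : OrderDual.ofDual g' < LM a := lt_of_le_of_ne hle (by
        intro hcc
        exact hg' (by rw [← hcc]; rfl))
      rw [show (HahnSeries.single g' 1 : GSF Γ) = mon (OrderDual.ofDual g') from rfl,
        d_mon_coeff_zero_of_lt E d hder hhardy hγ hlt le_rfl, mul_zero]

lemma order_d (hder : IsSeriesDerivation E d) (hhardy : IsHardy E d)
    {a : GSF Γ} (ha : a ≠ 0) (hγ : LM a ≠ 0) :
    (d a).order = OrderDual.toDual (LM a + LM (logD E d (E.LF (LM a)))) := by
  apply order_eq_of
  · rw [d_coeff_top E d hder hhardy ha hγ]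
    exact mul_ne_zero (LC_ne_zero ha) (LC_d_mon_ne_zero E d hhardy hγ)
  · intro g' hg'
    have hlt : LM a + LM (logD E d (E.LF (LM a))) < OrderDual.ofDual g' := hg'
    have : g' = OrderDual.toDual (LM a + (OrderDual.ofDual g' - LM a)) := by simp
    rw [this]
    exact d_coeff_hi E d hder hhardy hγ (by rw [lt_sub_iff_add_lt, add_comm]; exact hlt)

end Aux4
set_option synthInstance.maxHeartbeats 400000 in
/-- For a Hardy type series derivation and `a ∈ K*` with `a ≇ 1`:
`LT(a'/a) = LE(a)·LT(LF(a)'/LF(a))`; in particular `LM(a'/a) = θ^{(LF(a))}` and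
`LC(a'/a) = LE(a)·LC(LF(a)'/LF(a))`. -/
theorem statement7 {Φ Γ : Type*} [LinearOrder Φ] [AddCommGroup Γ] [LinearOrder Γ] [IsOrderedAddMonoid Γ]
    (E : HahnEmb Φ Γ) (d : GSF Γ → GSF Γ)
    (hder : IsSeriesDerivation E d) (hhardy : IsHardy E d)
    (a : GSF Γ) (ha : a ≠ 0) (hna : ¬ Kasymp a 1) :
    LTm (d a / a) = E.LE (LM a) • LTm (logD E d (E.LF (LM a))) ∧
    LM (d a / a) = theta E d (E.LF (LM a)) ∧
    LC (d a / a) = E.LE (LM a) * LC (logD E d (E.LF (LM a))) := by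
  have hγ : LM a ≠ 0 := LM_ne_zero_of_not_asymp_one ha hna
  set γ := LM a with hγdef
  set l := logD E d (E.LF γ) with hldef
  set θ := LM l with hθdef
  -- `d a` is nonzero with known order and leading coefficient
  have hcoeff : (d a).coeff (OrderDual.toDual (γ + θ)) = LC a * (E.LE γ * LC l) :=
    d_coeff_top E d hder hhardy ha hγ
  have hcne : LC a * (E.LE γ * LC l) ≠ 0 :=
    mul_ne_zero (LC_ne_zero ha) (LC_d_mon_ne_zero E d hhardy hγ)
  have hda : d a ≠ 0 := HahnSeries.ne_zero_of_coeff_ne_zero (by rw [hcoeff]; exact hcne)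
  have horder : (d a).order = OrderDual.toDual (γ + θ) := order_d E d hder hhardy ha hγ
  have hLCda : (d a).leadingCoeff = LC a * (E.LE γ * LC l) := by
    rw [HahnSeries.leadingCoeff_eq, horder, hcoeff]
  -- the quotient
  set q := d a / a with hqdef
  have hq : q ≠ 0 := div_ne_zero hda ha
  have heq : q * a = d a := div_mul_cancel₀ _ ha
  have hordmul : q.order + a.order = (d a).order := by
    rw [← heq]; exact (HahnSeries.order_mul hq ha).symm
  -- leading monomial of q
  have hLMq : LM q = θ := by
    have h1 : LM q + γ = γ + θ := by
      have : OrderDual.ofDual (q.order + a.order) = OrderDual.ofDual ((d a).order) := by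
        rw [hordmul]
      rw [horder] at this
      exact this
    have h2 : γ + LM q = γ + θ := by rw [add_comm γ (LM q)]; exact h1
    exact add_left_cancel h2
  -- leading coefficient of q
  have hLCq : LC q = E.LE γ * LC l := by
    have hmc := HahnSeries.coeff_mul_order_add_order q a
    rw [heq, hordmul] at hmc
    have : (d a).leadingCoeff = LC q * LC a := by
      rw [HahnSeries.leadingCoeff_eq, hmc]; rfl
    rw [hLCda] at this
    have h3 : LC q * LC a = (E.LE γ * LC l) * LC a := by rw [← this]; ring
    exact mul_right_cancel₀ (LC_ne_zero ha) h3
  refine ⟨?_, ?_, ?_⟩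
  · rw [LTm, hLMq, hLCq, LTm, ← hθdef, smul_smul]
  · rw [hLMq]; rfl
  · exact hLCq
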